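/- Approximation error of the LMM step: let E and Y be finite-dimensional real inner product spaces, F : E → Y differentiable, x ∈ E, A := F'(x), λ > 0, γ ≥ 0, v ∈ Y, and set x' := x − γ·B(A,λ)(A* v). If ‖F'(u) − F'(w)‖_op ≤ L·‖u − w‖ for all u, w on the closed segment joining x and x', then ‖F(x') − (F(x) − γ·P(A,λ)v)‖ ≤ (L·γ²/(8·λ))·‖Π_A v‖². -/

import Mathlib

open scoped RealInnerProductSpace

noncomputable section

variable {E Y : Type*} [NormedAddCommGroup E] [InnerProductSpace ℝ E] [FiniteDimensional ℝ E]
  [NormedAddCommGroup Y] [InnerProductSpace ℝ Y] [FiniteDimensional ℝ Y]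

/-- `B(A,λ) = (A*∘A + λ·id)⁻¹`. -/
def Bop (A : E →L[ℝ] Y) (lam : ℝ) : E →L[ℝ] E :=
  (ContinuousLinearMap.adjoint A ∘L A + lam • ContinuousLinearMap.id ℝ E).inverse

/-- `P(A,λ) = A ∘ B(A,λ) ∘ A*`. -/
def Pop (A : E →L[ℝ] Y) (lam : ℝ) : Y →L[ℝ] Y :=
  A ∘L Bop A lam ∘L ContinuousLinearMap.adjoint A

/-- `Π_A`, the orthogonal projection of `Y` onto the range of `A`. -/
def projRange (A : E →L[ℝ] Y) : Y →L[ℝ] Y :=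
  (LinearMap.range (A : E →ₗ[ℝ] Y)).subtypeL ∘L Submodule.orthogonalProjectionOnto (LinearMap.range (A : E →ₗ[ℝ] Y))

/-- Quadratic Taylor-type remainder bound from a linear bound on the derivative deviation. -/
theorem taylor_aux (F : E → Y) (F' : E → E →L[ℝ] Y) (hdiff : ∀ u : E, HasFDerivAt F (F' u) u)
    (x h : E) (C : ℝ)
    (hb : ∀ t ∈ Set.Icc (0:ℝ) 1, ‖F' (x + t • h) - F' x‖ ≤ C * t) :
    ‖F (x + h) - F x - F' x h‖ ≤ C * ‖h‖ / 2 := by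
  set f : ℝ → Y := fun t => F (x + t • h) - F x - t • (F' x h) with hf
  have hder : ∀ t : ℝ, HasDerivAt f ((F' (x + t • h) - F' x) h) t := by
    intro t
    have h1 : HasDerivAt (fun t : ℝ => x + t • h) h t := by
      simpa using ((hasDerivAt_id t).smul_const h).const_add x
    have h2 : HasDerivAt (fun t : ℝ => F (x + t • h)) (F' (x + t • h) h) t :=
      (hdiff (x + t • h)).comp_hasDerivAt t h1
    have h3 : HasDerivAt (fun t : ℝ => t • (F' x h)) (F' x h) t := by
      simpa using (hasDerivAt_id t).smul_const (F' x h)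
    exact ((h2.sub_const (F x)).sub h3).congr_deriv (by simp [ContinuousLinearMap.sub_apply])
  have key : ∀ s ∈ Set.Icc (0:ℝ) 1, ‖f s‖ ≤ C * ‖h‖ / 2 * s ^ 2 := by
    intro s hs
    refine image_norm_le_of_norm_deriv_right_le_deriv_boundary
      (f' := fun t => (F' (x + t • h) - F' x) h)
      (B := fun t => C * ‖h‖ / 2 * t ^ 2) (B' := fun t => C * ‖h‖ * t)
      (fun t _ => (hder t).continuousAt.continuousWithinAt)
      (fun t _ => (hder t).hasDerivWithinAt) ?_ (fun t => ?_) ?_ hs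
    · simp [hf]
    · have : HasDerivAt (fun t : ℝ => C * ‖h‖ / 2 * t ^ 2) (C * ‖h‖ / 2 * (2 * t)) t := by
        simpa using (hasDerivAt_pow 2 t).const_mul (C * ‖h‖ / 2)
      convert this using 1; ring
    · intro t ht
      calc ‖(F' (x + t • h) - F' x) h‖ ≤ ‖F' (x + t • h) - F' x‖ * ‖h‖ :=
            (F' (x + t • h) - F' x).le_opNorm h
        _ ≤ (C * t) * ‖h‖ := by
            have := hb t ⟨ht.1, ht.2.le⟩
            exact mul_le_mul_of_nonneg_right this (norm_nonneg h)
        _ = C * ‖h‖ * t := by ring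
  have := key 1 (by norm_num)
  simpa [hf] using this

/-- `(A*∘A + λ) ∘ B(A,λ) = id` for `λ > 0`. -/
theorem Bop_right_inverse (A : E →L[ℝ] Y) (lam : ℝ) (hlam : 0 < lam) (z : E) :
    (ContinuousLinearMap.adjoint A ∘L A + lam • ContinuousLinearMap.id ℝ E)
      (Bop A lam z) = z := by
  set T := ContinuousLinearMap.adjoint A ∘L A + lam • ContinuousLinearMap.id ℝ E with hT
  have hinj : Function.Injective T := by
    intro u w huw
    have h0 : T (u - w) = 0 := by rw [map_sub, huw, sub_self]
    have h1 : ⟪T (u - w), u - w⟫ = 0 := by rw [h0, inner_zero_left]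
    have h2 : ⟪T (u - w), u - w⟫ = ‖A (u - w)‖ ^ 2 + lam * ‖u - w‖ ^ 2 := by
      simp only [hT, ContinuousLinearMap.add_apply, ContinuousLinearMap.comp_apply,
        ContinuousLinearMap.smul_apply, ContinuousLinearMap.id_apply, inner_add_left,
        ContinuousLinearMap.adjoint_inner_left, real_inner_smul_left, real_inner_self_eq_norm_sq]
    have := h1 ▸ h2
    have hn : ‖u - w‖ ^ 2 = 0 := by nlinarith [sq_nonneg ‖A (u - w)‖, sq_nonneg ‖u - w‖]
    have := pow_eq_zero_iff (n := 2) (by norm_num) |>.mp hn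
    rwa [norm_eq_zero, sub_eq_zero] at this
  have hbij : Function.Bijective (T : E →ₗ[ℝ] E) :=
    ⟨hinj, (LinearMap.injective_iff_surjective).mp hinj⟩
  let e : E ≃L[ℝ] E := (LinearEquiv.ofBijective (T : E →ₗ[ℝ] E) hbij).toContinuousLinearEquiv
  have hTe : T = (e : E →L[ℝ] E) := by ext u; rfl
  have hB : Bop A lam = T.inverse := rfl
  rw [hB, hTe, ContinuousLinearMap.inverse_equiv]
  exact e.apply_symm_apply z

private lemma real_aux1 (L g lam a b : ℝ) (hL : 0 ≤ L) (hlam : 0 < lam)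
    (h : lam * a ^ 2 ≤ b ^ 2 / 4) :
    L * g ^ 2 * a ^ 2 / 2 ≤ L * g ^ 2 / (8 * lam) * b ^ 2 := by
  rw [div_mul_eq_mul_div, div_le_div_iff₀ (by norm_num) (by positivity)]
  nlinarith [mul_le_mul_of_nonneg_left h (mul_nonneg hL (sq_nonneg g))]

private lemma real_aux2 (L c n : ℝ) (hL : L < 0) (hc : 0 ≤ c) (hcle : c ≤ L * n * n / 2)
    (hn : 0 ≤ n) : n = 0 := by
  by_contra hne
  have hpos : 0 < n := lt_of_le_of_ne hn (Ne.symm hne)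
  nlinarith [mul_pos hpos hpos]

/-- Approximation error of the LMM step: the mapped iterate `F(x')` is close to the
linearized step `F(x) − γ·P(A,λ)v`. -/
theorem lmm_step_approximation_error
    (F : E → Y) (F' : E → E →L[ℝ] Y)
    (hdiff : ∀ u : E, HasFDerivAt F (F' u) u)
    (x : E) (lam γ L : ℝ) (hlam : 0 < lam) (hγ : 0 ≤ γ) (v : Y)
    (x' : E) (hx' : x' = x - γ • Bop (F' x) lam (ContinuousLinearMap.adjoint (F' x) v))
    (hLipseg : ∀ u w : E, u ∈ segment ℝ x x' → w ∈ segment ℝ x x' →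
      ‖F' u - F' w‖ ≤ L * ‖u - w‖) :
    ‖F x' - (F x - γ • Pop (F' x) lam v)‖ ≤
      L * γ ^ 2 / (8 * lam) * ‖projRange (F' x) v‖ ^ 2 := by
  set A := F' x with hA
  set d := Bop A lam (ContinuousLinearMap.adjoint A v) with hd
  set w : Y := projRange A v with hw
  -- basic facts about w
  have hwdef : w = ((Submodule.orthogonalProjectionOnto (LinearMap.range (A : E →ₗ[ℝ] Y)) v : LinearMap.range (A : E →ₗ[ℝ] Y)) : Y) := rfl
  have hwmem : w ∈ LinearMap.range (A : E →ₗ[ℝ] Y) := by rw [hwdef]; exact Submodule.coe_mem _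
  have hperp : v - w ∈ (LinearMap.range (A : E →ₗ[ℝ] Y))ᗮ := by
    rw [hwdef]; exact Submodule.sub_starProjection_mem_orthogonal (K := LinearMap.range (A : E →ₗ[ℝ] Y)) v
  -- adjoint kills the orthogonal complement
  have hadj : ContinuousLinearMap.adjoint A v = ContinuousLinearMap.adjoint A w := by
    have h0 : ContinuousLinearMap.adjoint A (v - w) = 0 := by
      have hz : ⟪ContinuousLinearMap.adjoint A (v - w),
          ContinuousLinearMap.adjoint A (v - w)⟫ = 0 := by
        rw [ContinuousLinearMap.adjoint_inner_left, real_inner_comm]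
        exact hperp _ (LinearMap.mem_range_self _ _)
      exact inner_self_eq_zero.mp hz
    have h1 : ContinuousLinearMap.adjoint A v - ContinuousLinearMap.adjoint A w = 0 := by
      rw [← map_sub]; exact h0
    exact sub_eq_zero.mp h1
  -- the normal equation
  have hTd : ContinuousLinearMap.adjoint A (A d) + lam • d = ContinuousLinearMap.adjoint A v := by
    have := Bop_right_inverse A lam hlam (ContinuousLinearMap.adjoint A v)
    simpa [ContinuousLinearMap.add_apply, ContinuousLinearMap.comp_apply,
      ContinuousLinearMap.smul_apply, ContinuousLinearMap.id_apply, ← hd] using this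
  -- energy identity
  have henergy : ‖A d‖ ^ 2 + lam * ‖d‖ ^ 2 = ⟪w, A d⟫ := by
    have h1 : ⟪ContinuousLinearMap.adjoint A (A d) + lam • d, d⟫
        = ‖A d‖ ^ 2 + lam * ‖d‖ ^ 2 := by
      simp [inner_add_left, ContinuousLinearMap.adjoint_inner_left, real_inner_smul_left,
        real_inner_self_eq_norm_sq]
    rw [hTd, hadj, ContinuousLinearMap.adjoint_inner_left] at h1
    exact h1.symm
  have hd2 : lam * ‖d‖ ^ 2 ≤ ‖w‖ ^ 2 / 4 := by
    have hle : ⟪w, A d⟫ ≤ ‖w‖ * ‖A d‖ := real_inner_le_norm w (A d)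
    nlinarith [sq_nonneg (‖A d‖ - ‖w‖ / 2)]
  -- the step
  set h : E := x' - x with hhdef
  have hh : h = -(γ • d) := by rw [hhdef, hx']; abel
  have hx'h : x' = x + h := by rw [hhdef]; abel
  have hnormh : ‖h‖ = γ * ‖d‖ := by
    rw [hh, norm_neg, norm_smul, Real.norm_of_nonneg hγ]
  have hPv : Pop A lam v = A d := rfl
  have hAh : A h = -(γ • Pop A lam v) := by
    rw [hPv, hh, map_neg, map_smul]
  have hgoalLHS : F x' - (F x - γ • Pop A lam v) = F (x + h) - F x - A h := by
    rw [← hx'h, hAh]; abel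
  -- Taylor bound
  have hb : ∀ t ∈ Set.Icc (0:ℝ) 1, ‖F' (x + t • h) - F' x‖ ≤ (L * ‖h‖) * t := by
    intro t ht
    have hmem : x + t • h ∈ segment ℝ x x' := by
      rw [segment_eq_image']
      exact ⟨t, ht, rfl⟩
    have hxmem : x ∈ segment ℝ x x' := left_mem_segment ℝ x x'
    have hlip := hLipseg _ _ hmem hxmem
    have hsub : x + t • h - x = t • h := by abel
    rw [hsub, norm_smul, Real.norm_of_nonneg ht.1] at hlip
    calc ‖F' (x + t • h) - F' x‖ ≤ L * (t * ‖h‖) := hlip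
      _ = L * ‖h‖ * t := by ring
  have htaylor : ‖F (x + h) - F x - A h‖ ≤ L * ‖h‖ * ‖h‖ / 2 :=
    taylor_aux F F' hdiff x h (L * ‖h‖) hb
  clear_value d w h
  rw [hgoalLHS]
  rcases le_or_gt 0 L with hL | hL
  · calc ‖F (x + h) - F x - A h‖ ≤ L * ‖h‖ * ‖h‖ / 2 := htaylor
      _ = L * γ ^ 2 * ‖d‖ ^ 2 / 2 := by rw [hnormh]; ring
      _ ≤ L * γ ^ 2 / (8 * lam) * ‖w‖ ^ 2 := by
          exact real_aux1 L γ lam ‖d‖ ‖w‖ hL hlam hd2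
  · -- L < 0 forces h = 0
    have hh0 : ‖h‖ = 0 :=
      real_aux2 L _ _ hL (norm_nonneg (F (x + h) - F x - A h)) htaylor (norm_nonneg h)
    have hlhs0 : ‖F (x + h) - F x - A h‖ = 0 := by
      refine le_antisymm ?_ (norm_nonneg _)
      calc ‖F (x + h) - F x - A h‖ ≤ L * ‖h‖ * ‖h‖ / 2 := htaylor
        _ = 0 := by rw [hh0]; ring
    rw [hlhs0]
    have hγd : γ * ‖d‖ = 0 := by rw [← hnormh]; exact hh0
    rcases mul_eq_zero.mp hγd with hγ0 | hd0
    · rw [hγ0]; ring_nf; positivity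
    · -- d = 0, so w = 0
      have hdz : d = 0 := norm_eq_zero.mp hd0
      have hAv : ContinuousLinearMap.adjoint A v = 0 := by
        rw [← hTd, hdz]; simp
      obtain ⟨u₀, hu₀⟩ := hwmem
      have hw2 : ‖w‖ ^ 2 = 0 := by
        have : (‖w‖ : ℝ) ^ 2 = ⟪ContinuousLinearMap.adjoint A w, u₀⟫ := by
          rw [ContinuousLinearMap.adjoint_inner_left, (by exact hu₀ : A u₀ = w), real_inner_self_eq_norm_sq]
        rw [← hadj, hAv] at this
        simpa using this
      rw [hw2]; ring_nf; exact le_refl 0
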